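/- Let α, β be nonzero real numbers and define f₃(θ) = α cos²θ sin θ + β sin²θ. Then every zero of f₃ is simple: if f₃(θ) = 0 then f₃'(θ) ≠ 0. -/

import Mathlib

theorem simple_zeros_f3 (α β : ℝ) (hα : α ≠ 0) (hβ : β ≠ 0) (θ : ℝ)
    (h : α * Real.cos θ ^ 2 * Real.sin θ + β * Real.sin θ ^ 2 = 0) :
    deriv (fun θ : ℝ => α * Real.cos θ ^ 2 * Real.sin θ + β * Real.sin θ ^ 2) θ ≠ 0 := by
  set s := Real.sin θ with hs
  set c := Real.cos θ with hc
  have hd : HasDerivAt (fun θ : ℝ => α * Real.cos θ ^ 2 * Real.sin θ + β * Real.sin θ ^ 2)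
      (α * (2 * c * (-s)) * s + α * c ^ 2 * c + β * (2 * s * c)) θ := by
    have hcd := Real.hasDerivAt_cos θ
    have hsd := Real.hasDerivAt_sin θ
    have h1 := (((hcd.pow 2).const_mul α).mul hsd).add ((hsd.pow 2).const_mul β)
    refine h1.congr_deriv ?_
    simp [← hs, ← hc]
  rw [hd.deriv]
  intro heq
  have hpy : s ^ 2 + c ^ 2 = 1 := Real.sin_sq_add_cos_sq θ
  have hfac : s * (α * c ^ 2 + β * s) = 0 := by linear_combination h
  rcases mul_eq_zero.mp hfac with h0 | h0
  · -- sin θ = 0, so c² = 1, derivative = α c³ = ±α ≠ 0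
    rw [h0] at heq
    have hc2 : c ^ 2 = 1 := by linear_combination hpy - s * h0
    have h3 : α * c ^ 3 = 0 := by linear_combination heq
    have hcne : c ≠ 0 := by
      intro hcz; rw [hcz] at hc2; norm_num at hc2
    rcases mul_eq_zero.mp h3 with h4 | h4
    · exact hα h4
    · exact hcne (pow_eq_zero_iff three_ne_zero |>.mp h4)
  · -- α c² + β s = 0
    have hsne : s ≠ 0 := by
      intro h0s
      apply hα
      have hc2 : c ^ 2 = 1 := by linear_combination hpy - s * h0s
      linear_combination h0 - β * h0s - α * hc2
    have hred : c * s * (β - 2 * α * s) = 0 := by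
      linear_combination heq - c * h0
    rcases mul_eq_zero.mp hred with h1 | h1
    · rcases mul_eq_zero.mp h1 with h2 | h2
      · -- c = 0 ⇒ β s = 0 ⇒ β = 0, contradiction
        apply hβ
        have hbs : β * s = 0 := by linear_combination h0 - α * c * h2
        exact (mul_eq_zero.mp hbs).resolve_right hsne
      · exact hsne h2
    · -- β = 2 α s ⇒ α (1 + s²) = 0 ⇒ α = 0
      apply hα
      have hzero : α * (1 + s ^ 2) = 0 := by linear_combination h0 - s * h1 - α * hpy
      exact (mul_eq_zero.mp hzero).resolve_right (by positivity)
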